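/- arXiv:1211.6624 — 3 statements merged into one kernel-verified Lean document; each statement's English description precedes it below -/
import Mathlib

section
/- Let P : ℝ → Matrix be differentiable with P(t) symmetric positive definite, satisfying the Riccati equation P' = AP + PAᵀ + Q - PCᵀR⁻¹CP (with all coefficient matrices possibly time-dependent). Let δz : ℝ → ℝⁿ satisfy δz' = (A_z - PCᵀR⁻¹C_z)·δz for matrices A_z(t), C_z(t). Then d/dt (δzᵀ P⁻¹ δz) = δzᵀ P⁻¹ M P⁻¹ δz, where M = P·Ãᵀ + Ã·P + P·C̃ᵀR⁻¹C̃·P - P·C_zᵀR⁻¹C_z·P - Q with Ã = A_z - A and C̃ = C_z - C. -/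
open Matrix
open scoped Matrix.Norms.L2Operator

lemma quad_deriv {n : ℕ} (M : ℝ → Matrix (Fin n) (Fin n) ℝ) (M' : Matrix (Fin n) (Fin n) ℝ)
    (z : ℝ → Fin n → ℝ) (v : Fin n → ℝ) (t : ℝ)
    (hM : HasDerivAt M M' t) (hz : HasDerivAt z v t) :
    HasDerivAt (fun s => z s ⬝ᵥ M s *ᵥ z s)
      (v ⬝ᵥ M t *ᵥ z t + z t ⬝ᵥ M' *ᵥ z t + z t ⬝ᵥ M t *ᵥ v) t := by
  have hzi : ∀ i, HasDerivAt (fun s => z s i) (v i) t := fun i => hasDerivAt_pi.1 hz i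
  have hMij : ∀ i j, HasDerivAt (fun s => M s i j) (M' i j) t := fun i j =>
    ((Matrix.entryLinearMap ℝ ℝ i j).toContinuousLinearMap.hasFDerivAt.comp_hasDerivAt t hM)
  have key : HasDerivAt (fun s => ∑ i, ∑ j, z s i * (M s i j * z s j))
      (∑ i, ∑ j, (v i * (M t i j * z t j) +
        z t i * (M' i j * z t j + M t i j * v j))) t := by
    apply HasDerivAt.fun_sum; intro i _
    apply HasDerivAt.fun_sum; intro j _
    exact (hzi i).mul ((hMij i j).mul (hzi j))
  convert key using 2 with s
  · simp [dotProduct, mulVec, Finset.mul_sum]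
  · simp only [dotProduct, mulVec, Finset.mul_sum, Finset.sum_add_distrib, mul_add]
    ring

/-- derivative of the weighted quadratic form along the EKF
Riccati flow (equation (7) of the paper). -/
theorem stmt11 {n p : ℕ}
    (P : ℝ → Matrix (Fin n) (Fin n) ℝ)
    (A Az : ℝ → Matrix (Fin n) (Fin n) ℝ)
    (C Cz : ℝ → Matrix (Fin p) (Fin n) ℝ)
    (Q : Matrix (Fin n) (Fin n) ℝ) (R : Matrix (Fin p) (Fin p) ℝ)
    (δz : ℝ → Fin n → ℝ)
    (hQ : Q.IsHermitian) (hR : R.PosDef)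
    (hPpd : ∀ t, (P t).PosDef)
    (hPder : ∀ t, HasDerivAt P
      (A t * P t + P t * (A t)ᵀ + Q - P t * (C t)ᵀ * R⁻¹ * C t * P t) t)
    (hδz : ∀ t, HasDerivAt δz
      ((Az t - P t * (C t)ᵀ * R⁻¹ * Cz t) *ᵥ δz t) t)
    (t : ℝ) :
    HasDerivAt (fun s => δz s ⬝ᵥ (P s)⁻¹ *ᵥ δz s)
      (δz t ⬝ᵥ ((P t)⁻¹ *
        (P t * (Az t - A t)ᵀ + (Az t - A t) * P t
          + P t * (Cz t - C t)ᵀ * R⁻¹ * (Cz t - C t) * P t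
          - P t * (Cz t)ᵀ * R⁻¹ * Cz t * P t - Q) * (P t)⁻¹) *ᵥ δz t) t := by
  have hPu : ∀ s, IsUnit (P s) := fun s =>
    (Matrix.isUnit_iff_isUnit_det _).2 (hPpd s).det_pos.ne'.isUnit
  -- derivative of the inverse
  set P' := A t * P t + P t * (A t)ᵀ + Q - P t * (C t)ᵀ * R⁻¹ * C t * P t with hP'
  set u : (Matrix (Fin n) (Fin n) ℝ)ˣ := (hPu t).unit with hu
  have hinv0 : HasDerivAt (fun s => Ring.inverse (P s))
      (-((P t)⁻¹ * P' * (P t)⁻¹)) t := by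
    have h := (hasFDerivAt_ringInverse (𝕜 := ℝ) u).comp_hasDerivAt t
      (by simpa [hu, (hPu t).unit_spec] using hPder t)
    simp [Function.comp, hu, (hPu t).unit_spec] at h ⊢; exact h
  have hinv : HasDerivAt (fun s => (P s)⁻¹) (-((P t)⁻¹ * P' * (P t)⁻¹)) t := by
    refine hinv0.congr_of_eventuallyEq ?_
    filter_upwards with s
    rw [Matrix.nonsing_inv_eq_ringInverse]
  have key := quad_deriv (fun s => (P s)⁻¹) (-((P t)⁻¹ * P' * (P t)⁻¹)) δz
    ((Az t - P t * (C t)ᵀ * R⁻¹ * Cz t) *ᵥ δz t) t hinv (hδz t)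
  convert key using 1
  -- now the algebraic identity
  set B := Az t - P t * (C t)ᵀ * R⁻¹ * Cz t with hB
  set Pi := (P t)⁻¹ with hPi
  have h1 : P t * Pi = 1 := Matrix.mul_nonsing_inv _ ((Matrix.isUnit_iff_isUnit_det _).1 (hPu t))
  have h2 : Pi * P t = 1 := Matrix.nonsing_inv_mul _ ((Matrix.isUnit_iff_isUnit_det _).1 (hPu t))
  have hRT : (R⁻¹)ᵀ = R⁻¹ := by
    have hRs : Rᵀ = R := by simpa [Matrix.IsHermitian, Matrix.conjTranspose_eq_transpose_of_trivial] using hR.1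
    rw [Matrix.transpose_nonsing_inv, hRs]
  have hQT : Qᵀ = Q := by simpa [Matrix.IsHermitian, Matrix.conjTranspose_eq_transpose_of_trivial] using hQ
  have hdot1 : B *ᵥ δz t ⬝ᵥ Pi *ᵥ δz t = δz t ⬝ᵥ (Bᵀ * Pi) *ᵥ δz t := by
    rw [Matrix.dotProduct_mulVec, Matrix.dotProduct_mulVec, ← Matrix.vecMul_vecMul,
      Matrix.vecMul_transpose]
  have hdot2 : δz t ⬝ᵥ Pi *ᵥ (B *ᵥ δz t) = δz t ⬝ᵥ (Pi * B) *ᵥ δz t := by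
    rw [Matrix.mulVec_mulVec]
  rw [hdot1, hdot2, ← dotProduct_add, ← Matrix.add_mulVec,
    ← dotProduct_add, ← Matrix.add_mulVec]
  congr 2
  have hPT : (P t)ᵀ = P t := by
    simpa [Matrix.IsHermitian, Matrix.conjTranspose_eq_transpose_of_trivial] using (hPpd t).1
  have e1 : ∀ X : Matrix (Fin n) (Fin n) ℝ, Pi * (P t * X) = X := fun X => by
    rw [← Matrix.mul_assoc, h2, Matrix.one_mul]
  have f1 : ∀ X : Matrix (Fin n) (Fin n) ℝ, P t * (Pi * X) = X := fun X => by
    rw [← Matrix.mul_assoc, h1, Matrix.one_mul]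
  have hcanc : ∀ X Y : Matrix (Fin n) (Fin n) ℝ,
      P t * X * P t = P t * Y * P t → X = Y := by
    intro X Y h
    have h' := congrArg (fun Z => Pi * Z * Pi) h
    simpa only [Matrix.mul_assoc, h1, h2, Matrix.mul_one, e1] using h'
  refine hcanc _ _ ?_
  simp only [Matrix.mul_add, Matrix.add_mul, Matrix.mul_neg, Matrix.neg_mul,
    Matrix.mul_assoc, h1, h2, Matrix.mul_one, Matrix.one_mul, e1, f1]
  rw [hB, hP']
  simp only [Matrix.transpose_sub, Matrix.transpose_mul, Matrix.transpose_transpose, hRT, hPT,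
    hQT, Matrix.mul_sub, Matrix.sub_mul, Matrix.mul_add, Matrix.add_mul]
  noncomm_ring
  simp only [Matrix.mul_assoc]
  abel
end

section
/- Let P be symmetric with p̲·I ≤ P ≤ p̄·I, 0 < p̲ ≤ p̄, Q symmetric with Q ≥ q̲·I, q̲ > 0, and let Ã, C̃ satisfy ‖Ã‖ ≤ κ_A·δ and ‖C̃‖ ≤ κ_C·δ for some δ ≥ 0, with R ≥ r̲·I, r̲ > 0. If (p̄²/r̲)·κ_C²·δ² + 2p̄·κ_A·δ ≤ q̲ - 2γ·p̄ for some γ ≥ 0, then P·Ãᵀ + Ã·P + P·C̃ᵀ·R⁻¹·C̃·P ≤ Q - 2γ·P. -/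
open Matrix
open scoped Matrix.Norms.L2Operator

private lemma dps14 {k : ℕ} (v : Fin k → ℝ) : 0 ≤ v ⬝ᵥ v :=
  Finset.sum_nonneg fun _ _ => mul_self_nonneg _

private lemma dmv14 {a b : ℕ} (M : Matrix (Fin a) (Fin b) ℝ) (x : Fin a → ℝ) (y : Fin b → ℝ) :
    x ⬝ᵥ (M *ᵥ y) = (Mᵀ *ᵥ x) ⬝ᵥ y := by
  rw [Matrix.dotProduct_mulVec, Matrix.mulVec_transpose]

private lemma normsq14 {k : ℕ} (v : Fin k → ℝ) :
    ‖(WithLp.equiv 2 (Fin k → ℝ)).symm v‖ ^ 2 = v ⬝ᵥ v := by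
  rw [← real_inner_self_eq_norm_sq, WithLp.equiv_symm_apply, EuclideanSpace.inner_toLp_toLp]
  simp

private lemma dCS14 {k : ℕ} (u v : Fin k → ℝ) :
    u ⬝ᵥ v ≤ ‖(WithLp.equiv 2 (Fin k → ℝ)).symm u‖ * ‖(WithLp.equiv 2 (Fin k → ℝ)).symm v‖ := by
  have h := real_inner_le_norm ((WithLp.equiv 2 (Fin k → ℝ)).symm u)
    ((WithLp.equiv 2 (Fin k → ℝ)).symm v)
  rwa [WithLp.equiv_symm_apply, EuclideanSpace.inner_toLp_toLp, star_trivial, dotProduct_comm] at h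

private lemma dCSsq14 {k : ℕ} (u v : Fin k → ℝ) :
    (u ⬝ᵥ v) * (u ⬝ᵥ v) ≤ (u ⬝ᵥ u) * (v ⬝ᵥ v) := by
  have h := real_inner_mul_inner_self_le ((WithLp.equiv 2 (Fin k → ℝ)).symm u)
    ((WithLp.equiv 2 (Fin k → ℝ)).symm v)
  simp only [WithLp.equiv_symm_apply, EuclideanSpace.inner_toLp_toLp, star_trivial,
    dotProduct_comm v u] at h
  exact h

private lemma mvnorm14 {a b : ℕ} (A : Matrix (Fin a) (Fin b) ℝ) (v : Fin b → ℝ) :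
    ‖(WithLp.equiv 2 (Fin a → ℝ)).symm (A *ᵥ v)‖ ≤ ‖A‖ * ‖(WithLp.equiv 2 (Fin b → ℝ)).symm v‖ :=
  A.l2_opNorm_mulVec ((WithLp.equiv 2 (Fin b → ℝ)).symm v)

private lemma qlb14 {k : ℕ} {M : Matrix (Fin k) (Fin k) ℝ} {c : ℝ}
    (h : (M - c • (1 : Matrix (Fin k) (Fin k) ℝ)).PosSemidef) (x : Fin k → ℝ) :
    c * (x ⬝ᵥ x) ≤ x ⬝ᵥ (M *ᵥ x) := by
  have h2 := h.dotProduct_mulVec_nonneg x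
  simp only [star_trivial, Matrix.sub_mulVec, Matrix.smul_mulVec, Matrix.one_mulVec,
    dotProduct_sub, dotProduct_smul, smul_eq_mul] at h2
  linarith

private lemma qub14 {k : ℕ} {M : Matrix (Fin k) (Fin k) ℝ} {c : ℝ}
    (h : (c • (1 : Matrix (Fin k) (Fin k) ℝ) - M).PosSemidef) (x : Fin k → ℝ) :
    x ⬝ᵥ (M *ᵥ x) ≤ c * (x ⬝ᵥ x) := by
  have h2 := h.dotProduct_mulVec_nonneg x
  simp only [star_trivial, Matrix.sub_mulVec, Matrix.smul_mulVec, Matrix.one_mulVec,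
    dotProduct_sub, dotProduct_smul, smul_eq_mul] at h2
  linarith

private lemma smul_one_psd14 {k : ℕ} {c : ℝ} (hc : 0 ≤ c) :
    (c • (1 : Matrix (Fin k) (Fin k) ℝ)).PosSemidef := by
  refine Matrix.PosSemidef.of_dotProduct_mulVec_nonneg ?_ ?_
  · simp [Matrix.IsHermitian]
  · intro x
    simp only [star_trivial, Matrix.smul_mulVec, Matrix.one_mulVec, dotProduct_smul,
      smul_eq_mul]
    exact mul_nonneg hc (dps14 x)

open scoped MatrixOrder in
private lemma Psq_bound14 {k : ℕ} {P : Matrix (Fin k) (Fin k) ℝ} {c : ℝ}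
    (hc : 0 ≤ c) (hP : P.PosSemidef) (hup : (c • (1 : Matrix (Fin k) (Fin k) ℝ) - P).PosSemidef)
    (x : Fin k → ℝ) : (P *ᵥ x) ⬝ᵥ (P *ᵥ x) ≤ c ^ 2 * (x ⬝ᵥ x) := by
  set S := CFC.sqrt P with hSdef
  have hSH : Sᴴ = S := (CFC.sqrt_nonneg P).posSemidef.isHermitian
  have hSS : S * S = P := CFC.sqrt_mul_sqrt_self P hP.nonneg
  have hconj := hup.conjTranspose_mul_mul_same S
  have key : Sᴴ * (c • (1 : Matrix (Fin k) (Fin k) ℝ) - P) * S = c • P - P * P := by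
    rw [hSH, ← hSS]
    simp only [Matrix.mul_sub, Matrix.sub_mul, Matrix.mul_smul, Matrix.smul_mul, Matrix.mul_one]
    rw [Matrix.mul_assoc, Matrix.mul_assoc, Matrix.mul_assoc]
  rw [key] at hconj
  have h1 := hconj.dotProduct_mulVec_nonneg x
  simp only [star_trivial, Matrix.sub_mulVec, Matrix.smul_mulVec, dotProduct_sub,
    dotProduct_smul, smul_eq_mul, ← Matrix.mulVec_mulVec] at h1
  have hPt : Pᵀ = P := by
    rw [← Matrix.conjTranspose_eq_transpose_of_trivial]; exact hP.isHermitian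
  have h2 : x ⬝ᵥ (P *ᵥ (P *ᵥ x)) = (P *ᵥ x) ⬝ᵥ (P *ᵥ x) := by rw [dmv14, hPt]
  have h3 : x ⬝ᵥ (P *ᵥ x) ≤ c * (x ⬝ᵥ x) := qub14 hup x
  nlinarith [hP.dotProduct_mulVec_nonneg x, dps14 x, h1, h2, h3]

private lemma Rinv_bound14 {k : ℕ} {R : Matrix (Fin k) (Fin k) ℝ} {r : ℝ} (hr : 0 < r)
    (hR : R.PosDef) (hRl : (R - r • (1 : Matrix (Fin k) (Fin k) ℝ)).PosSemidef)
    (y : Fin k → ℝ) : y ⬝ᵥ (R⁻¹ *ᵥ y) ≤ (y ⬝ᵥ y) / r := by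
  have hinv : R⁻¹.PosDef := hR.inv
  have hIH : R⁻¹ᴴ = R⁻¹ := hinv.isHermitian
  have hIt : R⁻¹ᵀ = R⁻¹ := by
    rw [← Matrix.conjTranspose_eq_transpose_of_trivial]; exact hIH
  have hRR : R⁻¹ * R = 1 := Matrix.nonsing_inv_mul R (isUnit_iff_ne_zero.2 hR.det_pos.ne')
  have hconj := hRl.conjTranspose_mul_mul_same R⁻¹
  have key : R⁻¹ᴴ * (R - r • (1 : Matrix (Fin k) (Fin k) ℝ)) * R⁻¹
      = R⁻¹ - r • (R⁻¹ * R⁻¹) := by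
    rw [hIH, Matrix.mul_sub, Matrix.mul_smul, Matrix.mul_one, hRR, Matrix.sub_mul,
      Matrix.one_mul, Matrix.smul_mul]
  rw [key] at hconj
  set z := R⁻¹ *ᵥ y with hz
  have h1 := hconj.dotProduct_mulVec_nonneg y
  simp only [star_trivial, Matrix.sub_mulVec, Matrix.smul_mulVec, dotProduct_sub,
    dotProduct_smul, smul_eq_mul, ← Matrix.mulVec_mulVec, ← hz] at h1
  have h2 : y ⬝ᵥ (R⁻¹ *ᵥ z) = z ⬝ᵥ z := by rw [dmv14, hIt]
  rw [h2] at h1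
  have hCS := dCSsq14 y z
  rw [le_div_iff₀ hr]
  nlinarith [mul_le_mul_of_nonneg_left hCS hr.le, dps14 y, dps14 z,
    mul_le_mul_of_nonneg_right h1 (dps14 y), mul_le_mul_of_nonneg_right h1 (dps14 z)]

/-- quantitative contraction region estimate (core of Cor. 2):
the norm bounds on `At`, `Ct` plus the scalar inequality give
`P Atᵀ + At P + P Ctᵀ R⁻¹ Ct P ≤ Q - 2γ P`. -/
theorem stmt14 {n p : ℕ} (P Q At : Matrix (Fin n) (Fin n) ℝ)
    (Ct : Matrix (Fin p) (Fin n) ℝ) (R : Matrix (Fin p) (Fin p) ℝ)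
    (plow pbar qlow rlow κA κC δ γ : ℝ)
    (hplow : 0 < plow) (hle : plow ≤ pbar) (hqlow : 0 < qlow) (hrlow : 0 < rlow)
    (hδ : 0 ≤ δ) (hγ : 0 ≤ γ)
    (hPsym : P.IsHermitian) (hQsym : Q.IsHermitian)
    (hPlow : (P - plow • (1 : Matrix (Fin n) (Fin n) ℝ)).PosSemidef)
    (hPup : (pbar • (1 : Matrix (Fin n) (Fin n) ℝ) - P).PosSemidef)
    (hQlow : (Q - qlow • (1 : Matrix (Fin n) (Fin n) ℝ)).PosSemidef)
    (hA : ‖At‖ ≤ κA * δ) (hC : ‖Ct‖ ≤ κC * δ)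
    (hR : R.PosDef)
    (hRlow : (R - rlow • (1 : Matrix (Fin p) (Fin p) ℝ)).PosSemidef)
    (hkey : (pbar ^ 2 / rlow) * κC ^ 2 * δ ^ 2 + 2 * pbar * κA * δ ≤ qlow - 2 * γ * pbar) :
    (Q - (2 * γ) • P - (P * Atᵀ + At * P + P * Ctᵀ * R⁻¹ * Ct * P)).PosSemidef := by
  have hpbar : 0 ≤ pbar := le_trans hplow.le hle
  have hPt : Pᵀ = P := by
    rw [← Matrix.conjTranspose_eq_transpose_of_trivial]; exact hPsym
  have hPpsd : P.PosSemidef := by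
    have := hPlow.add (smul_one_psd14 (k := n) hplow.le)
    simpa using this
  have hIt : R⁻¹ᵀ = R⁻¹ := by
    rw [← Matrix.conjTranspose_eq_transpose_of_trivial]; exact hR.inv.isHermitian
  refine Matrix.PosSemidef.of_dotProduct_mulVec_nonneg ?_ ?_
  · -- Hermitian
    have hQt : Qᵀ = Q := by
      rw [← Matrix.conjTranspose_eq_transpose_of_trivial]; exact hQsym
    show _ = _
    rw [Matrix.conjTranspose_eq_transpose_of_trivial]
    simp only [Matrix.transpose_sub, Matrix.transpose_add, Matrix.transpose_smul,
      Matrix.transpose_mul, Matrix.transpose_transpose, hPt, hQt, hIt]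
    simp only [Matrix.mul_assoc]
    abel
  · intro x
    set u := P *ᵥ x with hu
    set w := Atᵀ *ᵥ x with hw
    set y := Ct *ᵥ u with hy
    set z := R⁻¹ *ᵥ y with hz
    have e1 : x ⬝ᵥ ((P * Atᵀ) *ᵥ x) = u ⬝ᵥ w := by
      rw [← Matrix.mulVec_mulVec, dmv14, hPt, ← hu, ← hw]
    have e2 : x ⬝ᵥ ((At * P) *ᵥ x) = w ⬝ᵥ u := by
      rw [← Matrix.mulVec_mulVec, dmv14, ← hu, ← hw]
    have e3 : x ⬝ᵥ ((P * Ctᵀ * R⁻¹ * Ct * P) *ᵥ x) = y ⬝ᵥ z := by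
      rw [← Matrix.mulVec_mulVec, ← Matrix.mulVec_mulVec, ← Matrix.mulVec_mulVec,
        ← Matrix.mulVec_mulVec, ← hu, dmv14, hPt, ← hu, ← hy, dmv14, Matrix.transpose_transpose,
        ← hy, ← hz]
    -- Euclidean norms
    set b := ‖(WithLp.equiv 2 (Fin n → ℝ)).symm x‖ with hb
    have hbnn : 0 ≤ b := norm_nonneg _
    have hbsq : b ^ 2 = x ⬝ᵥ x := normsq14 x
    have hAd : 0 ≤ κA * δ := le_trans (norm_nonneg At) hA
    have hCd : 0 ≤ κC * δ := le_trans (norm_nonneg Ct) hC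
    -- bound on ‖u‖
    have hunorm : ‖(WithLp.equiv 2 (Fin n → ℝ)).symm u‖ ≤ pbar * b := by
      have h1 : u ⬝ᵥ u ≤ pbar ^ 2 * (x ⬝ᵥ x) := Psq_bound14 hpbar hPpsd hPup x
      have h2 : ‖(WithLp.equiv 2 (Fin n → ℝ)).symm u‖ ^ 2 = u ⬝ᵥ u := normsq14 u
      nlinarith [norm_nonneg ((WithLp.equiv 2 (Fin n → ℝ)).symm u), mul_nonneg hpbar hbnn, hbsq]
    -- bound on ‖w‖
    have hwnorm : ‖(WithLp.equiv 2 (Fin n → ℝ)).symm w‖ ≤ κA * δ * b := by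
      have h1 := mvnorm14 Atᵀ x
      have h2 : ‖Atᵀ‖ = ‖At‖ := by
        rw [← Matrix.conjTranspose_eq_transpose_of_trivial, Matrix.l2_opNorm_conjTranspose]
      rw [hw]
      calc ‖(WithLp.equiv 2 (Fin n → ℝ)).symm (Atᵀ *ᵥ x)‖ ≤ ‖Atᵀ‖ * b := h1
        _ ≤ κA * δ * b := by rw [h2]; exact mul_le_mul_of_nonneg_right hA hbnn
    -- cross term
    have hcross : u ⬝ᵥ w ≤ pbar * (κA * δ) * b ^ 2 := by
      calc u ⬝ᵥ w ≤ ‖(WithLp.equiv 2 (Fin n → ℝ)).symm u‖ * ‖(WithLp.equiv 2 (Fin n → ℝ)).symm w‖ :=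
            dCS14 u w
        _ ≤ (pbar * b) * (κA * δ * b) := by
            apply mul_le_mul hunorm hwnorm (norm_nonneg _) (mul_nonneg hpbar hbnn)
        _ = pbar * (κA * δ) * b ^ 2 := by ring
    -- y norm
    have hynorm : ‖(WithLp.equiv 2 (Fin p → ℝ)).symm y‖ ≤ κC * δ * (pbar * b) := by
      calc ‖(WithLp.equiv 2 (Fin p → ℝ)).symm y‖ ≤ ‖Ct‖ * ‖(WithLp.equiv 2 (Fin n → ℝ)).symm u‖ :=
            mvnorm14 Ct u
        _ ≤ κC * δ * (pbar * b) := mul_le_mul hC hunorm (norm_nonneg _) hCd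
    have hyy : y ⬝ᵥ y ≤ (κC * δ) ^ 2 * pbar ^ 2 * b ^ 2 := by
      have := normsq14 y
      nlinarith [norm_nonneg ((WithLp.equiv 2 (Fin p → ℝ)).symm y),
        mul_nonneg hCd (mul_nonneg hpbar hbnn)]
    -- R term
    have hRterm : y ⬝ᵥ z ≤ (κC * δ) ^ 2 * pbar ^ 2 * b ^ 2 / rlow := by
      calc y ⬝ᵥ z ≤ (y ⬝ᵥ y) / rlow := Rinv_bound14 hrlow hR hRlow y
        _ ≤ (κC * δ) ^ 2 * pbar ^ 2 * b ^ 2 / rlow := by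
            apply div_le_div_of_nonneg_right hyy hrlow.le
    have hRterm' : y ⬝ᵥ z ≤ (pbar ^ 2 / rlow * κC ^ 2 * δ ^ 2) * b ^ 2 := by
      calc y ⬝ᵥ z ≤ (κC * δ) ^ 2 * pbar ^ 2 * b ^ 2 / rlow := hRterm
        _ = (pbar ^ 2 / rlow * κC ^ 2 * δ ^ 2) * b ^ 2 := by ring
    -- main quadratic bounds
    have hQ : qlow * (x ⬝ᵥ x) ≤ x ⬝ᵥ (Q *ᵥ x) := qlb14 hQlow x
    have hPq : x ⬝ᵥ (P *ᵥ x) ≤ pbar * (x ⬝ᵥ x) := qub14 hPup x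
    have hwu : w ⬝ᵥ u = u ⬝ᵥ w := dotProduct_comm w u
    -- expand goal
    simp only [star_trivial, Matrix.sub_mulVec, Matrix.add_mulVec, Matrix.smul_mulVec,
      dotProduct_sub, dotProduct_add, dotProduct_smul, smul_eq_mul]
    rw [e1, e2, e3, hwu]
    -- conclude
    have hgP : 2 * γ * (x ⬝ᵥ P *ᵥ x) ≤ 2 * γ * (pbar * (x ⬝ᵥ x)) := by
      apply mul_le_mul_of_nonneg_left hPq (by positivity)
    rw [← hbsq] at hQ hgP
    have final := mul_le_mul_of_nonneg_right hkey (sq_nonneg b)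
    clear_value u w y z b
    linarith [hQ, hcross, hRterm', hgP, final]
end

section
/- Let Q, P, Ã, C̃, C, R be as in the EKF contraction inequality, and suppose P·Ãᵀ + Ã·P + P·C̃ᵀR⁻¹C̃·P ≤ Q - 2γ·P + P·CᵀR⁻¹C·P holds for some γ ≥ 0. If the Riccati equation is modified by adding 2N for a symmetric positive definite matrix N with smallest eigenvalue n̲ and P ≤ p̄·I still holds, then P·Ãᵀ + Ã·P + P·C̃ᵀR⁻¹C̃·P ≤ (Q + 2N) - 2(γ + n̲/p̄)·P + P·CᵀR⁻¹C·P. -/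
open Matrix

theorem psd_smul {n : ℕ} {A : Matrix (Fin n) (Fin n) ℝ} {c : ℝ} (hc : 0 ≤ c)
    (hA : A.PosSemidef) : (c • A).PosSemidef := by
  constructor
  · unfold Matrix.IsHermitian
    rw [Matrix.conjTranspose_smul, hA.1.eq]
    simp
  · intro x
    have := hA.2 x
    exact (hA.smul hc).2 x

/-- adding `2N` to the Riccati equation increases the guaranteed
contraction rate by `nlow/pbar` (generalized Reif modification). -/
theorem stmt17 {n p : ℕ} (Q P N At : Matrix (Fin n) (Fin n) ℝ)
    (Ct C : Matrix (Fin p) (Fin n) ℝ) (R : Matrix (Fin p) (Fin p) ℝ)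
    (γ nlow pbar : ℝ) (hγ : 0 ≤ γ) (hnlow : 0 < nlow) (hpbar : 0 < pbar)
    (hQ : Q.PosDef) (hNsym : N.IsHermitian) (hNpd : N.PosDef)
    (hNlow : (N - nlow • (1 : Matrix (Fin n) (Fin n) ℝ)).PosSemidef)
    (hP : P.PosDef)
    (hPup : (pbar • (1 : Matrix (Fin n) (Fin n) ℝ) - P).PosSemidef)
    (hR : R.PosDef)
    (hineq : (Q - (2 * γ) • P + P * Cᵀ * R⁻¹ * C * P
      - (P * Atᵀ + At * P + P * Ctᵀ * R⁻¹ * Ct * P)).PosSemidef) :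
    ((Q + (2 : ℝ) • N) - (2 * (γ + nlow / pbar)) • P + P * Cᵀ * R⁻¹ * C * P
      - (P * Atᵀ + At * P + P * Ctᵀ * R⁻¹ * Ct * P)).PosSemidef := by
  have hextra : ((2:ℝ) • (N - nlow • (1 : Matrix (Fin n) (Fin n) ℝ))
      + (2 * nlow / pbar) • (pbar • (1 : Matrix (Fin n) (Fin n) ℝ) - P)).PosSemidef :=
    (psd_smul (by norm_num) hNlow).add (psd_smul (by positivity) hPup)
  have key := hineq.add hextra
  have h1 : (2 * nlow / pbar) • (pbar • (1 : Matrix (Fin n) (Fin n) ℝ))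
      = (2 * nlow) • (1 : Matrix (Fin n) (Fin n) ℝ) := by
    rw [smul_smul]; congr 1; field_simp
  have heq : (Q - (2 * γ) • P + P * Cᵀ * R⁻¹ * C * P
      - (P * Atᵀ + At * P + P * Ctᵀ * R⁻¹ * Ct * P))
      + ((2:ℝ) • (N - nlow • (1 : Matrix (Fin n) (Fin n) ℝ))
      + (2 * nlow / pbar) • (pbar • (1 : Matrix (Fin n) (Fin n) ℝ) - P))
      = ((Q + (2 : ℝ) • N) - (2 * (γ + nlow / pbar)) • P + P * Cᵀ * R⁻¹ * C * P
      - (P * Atᵀ + At * P + P * Ctᵀ * R⁻¹ * Ct * P)) := by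
    rw [smul_sub, smul_sub, h1]
    have h2 : (2 * (γ + nlow / pbar)) • P = (2*γ) • P + (2 * nlow / pbar) • P := by
      rw [← add_smul]; ring_nf
    have h3 : (2:ℝ) • (nlow • (1 : Matrix (Fin n) (Fin n) ℝ))
        = (2 * nlow) • (1 : Matrix (Fin n) (Fin n) ℝ) := by rw [smul_smul]
    rw [h2, h3]
    abel
  rw [heq] at key
  exact key
end
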